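/- Let φ(x) = exp(-x²). Then for every λ ∈ (0, 1) and every real number x, |P_∞(λ, x)| ≤ 24/(1 + x²). -/

import Mathlib

set_option maxHeartbeats 1000000


open Real

/-- The Fourier cosine coefficients of the auxiliary function `H`. -/
noncomputable def a : ℕ → ℝ
  | 0 => 3 / 4
  | 1 => 4 / (3 * Real.pi)
  | 2 => -(1 / 4)
  | k => -4 * Real.sin (k * Real.pi / 2) / (Real.pi * k * (k ^ 2 - 4))

/-- `A_∞(λ) = -Σ_{k=1}^∞ a_k φ(λk)`. -/
noncomputable def Ainf (φ : ℝ → ℝ) (lam : ℝ) : ℝ :=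
  -∑' k : ℕ, a (k + 1) * φ (lam * (k + 1))

/-- `P_∞(λ, x) = 2 A_∞(λ) φ(x) + Σ_{k=1}^∞ a_k (φ(x + λk) + φ(x - λk))`. -/
noncomputable def Pinf (φ : ℝ → ℝ) (lam x : ℝ) : ℝ :=
  2 * Ainf φ lam * φ x +
    ∑' k : ℕ, a (k + 1) * (φ (x + lam * (k + 1)) + φ (x - lam * (k + 1)))


lemma a_succ3 (n : ℕ) : a (n+3) = -4 * Real.sin (((n:ℝ)+3) * Real.pi / 2) / (Real.pi * ((n:ℝ)+3) * (((n:ℝ)+3) ^ 2 - 4)) := by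
  show -4 * Real.sin (((n+3:ℕ):ℝ) * Real.pi / 2) / (Real.pi * ((n+3:ℕ):ℝ) * (((n+3:ℕ):ℝ) ^ 2 - 4)) = _
  push_cast
  ring_nf

lemma abs_a_succ3_le' (n : ℕ) :
    |a (n+3)| ≤ 4 / (Real.pi * ((n:ℝ)+3) * (((n:ℝ)+3) ^ 2 - 4)) := by
  have hn : (0:ℝ) ≤ (n:ℝ) := Nat.cast_nonneg n
  have hpi : (0:ℝ) < Real.pi := Real.pi_pos
  rw [a_succ3, abs_div]
  have hq : (0:ℝ) < ((n:ℝ)+3) ^ 2 - 4 := by nlinarith [sq_nonneg ((n:ℝ))]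
  have hden : (0:ℝ) < Real.pi * ((n:ℝ)+3) * (((n:ℝ)+3) ^ 2 - 4) :=
    mul_pos (mul_pos hpi (by linarith)) hq
  rw [abs_of_pos hden]
  have h1 : |Real.sin (((n:ℝ)+3) * Real.pi / 2)| ≤ 1 :=
    abs_le.mpr ⟨Real.neg_one_le_sin _, Real.sin_le_one _⟩
  have hnum : |(-4 : ℝ) * Real.sin (((n:ℝ)+3) * Real.pi / 2)| ≤ 4 := by
    rw [abs_mul, abs_neg, abs_of_nonneg (by norm_num : (0:ℝ) ≤ 4)]
    nlinarith [abs_nonneg (Real.sin (((n:ℝ)+3) * Real.pi / 2))]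
  gcongr

lemma abs_a_succ3_le (n : ℕ) :
    |a (n+3)| ≤ 4 / (Real.pi * (((n:ℝ)+1) * ((n:ℝ)+2) * ((n:ℝ)+3))) := by
  have hn : (0:ℝ) ≤ (n:ℝ) := Nat.cast_nonneg n
  have hpi : (0:ℝ) < Real.pi := Real.pi_pos
  refine (abs_a_succ3_le' n).trans ?_
  gcongr 4 / ?_
  nlinarith [mul_pos hpi (show (0:ℝ) < ((n:ℝ)+3)*(3*(n:ℝ)+3) by positivity)]

lemma abs_a_le_cube (n : ℕ) : |a (n+1)| ≤ 3 / ((n:ℝ)+1) ^ 3 := by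
  match n with
  | 0 => show |a 1| ≤ _
         rw [show a 1 = 4 / (3 * Real.pi) from rfl]
         rw [abs_of_pos (by positivity)]
         have := Real.pi_gt_three
         rw [div_le_div_iff₀ (by positivity) (by positivity)]
         norm_num
         nlinarith
  | 1 => show |a 2| ≤ _
         rw [show a 2 = -(1/4) from rfl]
         norm_num [abs_of_nonpos]
  | (m+2) =>
    have h := abs_a_succ3_le' m
    have hm : (0:ℝ) ≤ (m:ℝ) := Nat.cast_nonneg m
    have hpi := Real.pi_gt_three
    refine h.trans ?_
    rw [show ((m+2:ℕ):ℝ) + 1 = (m:ℝ)+3 by push_cast; ring]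
    have hq : (0:ℝ) < ((m:ℝ)+3) ^ 2 - 4 := by nlinarith [sq_nonneg ((m:ℝ))]
    rw [div_le_div_iff₀ (mul_pos (mul_pos Real.pi_pos (by linarith : (0:ℝ) < (m:ℝ)+3)) hq) (by positivity)]
    nlinarith [mul_nonneg (mul_nonneg (show (0:ℝ) ≤ ((m:ℝ)+3)^2 - 9 by nlinarith [sq_nonneg ((m:ℝ))]) (show (0:ℝ) ≤ (m:ℝ)+3 by linarith)) (show (0:ℝ) ≤ 3*Real.pi - 4 by linarith), mul_nonneg (show (0:ℝ) ≤ 15*Real.pi - 36 by linarith) (show (0:ℝ) ≤ (m:ℝ)+3 by linarith)]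

lemma tele_eq (n : ℕ) : (1:ℝ)/(((n:ℝ)+1) * ((n:ℝ)+2) * ((n:ℝ)+3))
    = (fun m : ℕ => 1/(2*((m:ℝ)+1)*((m:ℝ)+2))) n - (fun m : ℕ => 1/(2*((m:ℝ)+1)*((m:ℝ)+2))) (n+1) := by
  have h1 : ((n:ℝ)+1) ≠ 0 := by positivity
  have h2 : ((n:ℝ)+2) ≠ 0 := by positivity
  have h3 : ((n:ℝ)+3) ≠ 0 := by positivity
  simp only
  push_cast
  field_simp
  ring

lemma sum_tele_le (N : ℕ) :
    ∑ n ∈ Finset.range N, (1:ℝ)/(((n:ℝ)+1) * ((n:ℝ)+2) * ((n:ℝ)+3)) ≤ 1/4 := by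
  rw [Finset.sum_congr rfl (fun n _ => tele_eq n), Finset.sum_range_sub']
  norm_num
  positivity

lemma summable_tele : Summable (fun n : ℕ => (1:ℝ)/(((n:ℝ)+1) * ((n:ℝ)+2) * ((n:ℝ)+3))) := by
  apply summable_of_sum_range_le (c := 1/4) (fun n => by positivity) sum_tele_le

lemma tsum_tele_le : ∑' n : ℕ, (1:ℝ)/(((n:ℝ)+1) * ((n:ℝ)+2) * ((n:ℝ)+3)) ≤ 1/4 :=
  tsum_le_of_sum_range_le (fun n => by positivity) sum_tele_le

lemma summable_absa : Summable (fun k : ℕ => |a (k+1)|) := by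
  rw [← summable_nat_add_iff 2]
  apply Summable.of_nonneg_of_le (fun n => abs_nonneg _)
      (fun n => ?_) (summable_tele.mul_left (4/Real.pi))
  have h := abs_a_succ3_le n
  calc |a (n+2+1)| = |a (n+3)| := by norm_num
    _ ≤ 4 / (Real.pi * (((n:ℝ)+1) * ((n:ℝ)+2) * ((n:ℝ)+3))) := h
    _ = (4/Real.pi) * ((1:ℝ)/(((n:ℝ)+1) * ((n:ℝ)+2) * ((n:ℝ)+3))) := by
        rw [div_mul_div_comm]
        norm_num

lemma tsum_absa_le : ∑' k : ℕ, |a (k+1)| ≤ 1 := by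
  have hs := summable_absa
  rw [← Summable.sum_add_tsum_nat_add 2 hs]
  have h1 : ∑ i ∈ Finset.range 2, |a (i+1)| = |a 1| + |a 2| := by
    simp [Finset.sum_range_succ]
  have ha1 : |a 1| = 4/(3*Real.pi) := by
    rw [show a 1 = 4 / (3 * Real.pi) from rfl, abs_of_pos (by positivity)]
  have ha2 : |a 2| = 1/4 := by
    rw [show a 2 = -(1/4) from rfl]
    norm_num
  have htail : ∑' k : ℕ, |a (k+2+1)| ≤ 1/Real.pi := by
    have := Summable.tsum_le_tsum (f := fun k : ℕ => |a (k+2+1)|)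
      (g := fun n : ℕ => (4/Real.pi) * ((1:ℝ)/(((n:ℝ)+1) * ((n:ℝ)+2) * ((n:ℝ)+3))))
      (fun n => by
        calc |a (n+2+1)| = |a (n+3)| := by norm_num
          _ ≤ 4 / (Real.pi * (((n:ℝ)+1) * ((n:ℝ)+2) * ((n:ℝ)+3))) := abs_a_succ3_le n
          _ = (4/Real.pi) * ((1:ℝ)/(((n:ℝ)+1) * ((n:ℝ)+2) * ((n:ℝ)+3))) := by
              rw [div_mul_div_comm]; norm_num)
      ((summable_nat_add_iff 2).mpr hs) (summable_tele.mul_left (4/Real.pi))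
    refine this.trans ?_
    rw [tsum_mul_left]
    have hpi : (0:ℝ) < Real.pi := Real.pi_pos
    calc (4/Real.pi) * ∑' n : ℕ, (1:ℝ)/(((n:ℝ)+1) * ((n:ℝ)+2) * ((n:ℝ)+3))
        ≤ (4/Real.pi) * (1/4) := by
          apply mul_le_mul_of_nonneg_left tsum_tele_le (by positivity)
      _ = 1/Real.pi := by field_simp
  have hpi := Real.pi_gt_d2
  have hpi0 : (0:ℝ) < Real.pi := Real.pi_pos
  have : 4/(3*Real.pi) + 1/Real.pi ≤ 0.75 := by
    rw [div_add_div _ _ (by positivity) (by positivity), div_le_iff₀ (by positivity)]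
    nlinarith
  rw [h1, ha1, ha2]
  linarith

lemma exp_neg_sq_le_one (t : ℝ) : Real.exp (-t^2) ≤ 1 :=
  Real.exp_le_one_iff.mpr (by nlinarith [sq_nonneg t])

lemma one_add_sq_mul_exp_le (t : ℝ) : (1 + t^2) * Real.exp (-t^2) ≤ 1 := by
  have h := Real.add_one_le_exp (t^2)
  have hp := Real.exp_pos (-t^2)
  rw [Real.exp_neg]
  rw [mul_inv_le_iff₀ (Real.exp_pos _)]
  linarith

lemma exp_neg_sq_le_quartic (t : ℝ) : Real.exp (-t^2) ≤ 4 / (2 + t^2)^2 := by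
  have h := Real.add_one_le_exp (t^2/2)
  have h2 : ((2 + t^2)/2)^2 ≤ Real.exp (t^2) := by
    have he : Real.exp (t^2) = (Real.exp (t^2/2))^2 := by
      rw [← Real.exp_nat_mul]
      norm_num
      ring
    rw [he]
    have h0 : (0:ℝ) ≤ (2+t^2)/2 := by positivity
    have : (2+t^2)/2 ≤ Real.exp (t^2/2) := by linarith
    exact pow_le_pow_left₀ h0 this 2
  have hpos : (0:ℝ) < ((2+t^2)/2)^2 := by positivity
  calc Real.exp (-t^2) = (Real.exp (t^2))⁻¹ := Real.exp_neg _
    _ ≤ (((2+t^2)/2)^2)⁻¹ := by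
        apply inv_anti₀ hpos h2
    _ = 4/(2+t^2)^2 := by
        rw [← one_div]
        rw [div_eq_div_iff (by positivity) (by positivity)]
        ring

lemma exp_neg_sq_le_exp_abs (t : ℝ) : Real.exp (-t^2) ≤ (4/3) * Real.exp (-|t|) := by
  have h1 : Real.exp (1/4 : ℝ) ≤ 4/3 := by
    have := Real.add_one_le_exp (-(1/4) : ℝ)
    have h2 : (3/4 : ℝ) ≤ Real.exp (-(1/4)) := by linarith
    have h3 := Real.exp_pos (-(1/4):ℝ)
    have h4 : Real.exp (1/4:ℝ) * Real.exp (-(1/4):ℝ) = 1 := by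
      rw [← Real.exp_add]; norm_num
    nlinarith [Real.exp_pos (1/4:ℝ)]
  have h2 : -t^2 ≤ 1/4 - |t| := by nlinarith [sq_abs t, sq_nonneg (|t| - 1/2)]
  calc Real.exp (-t^2) ≤ Real.exp (1/4 - |t|) := Real.exp_le_exp.mpr h2
    _ = Real.exp (1/4:ℝ) * Real.exp (-|t|) := by rw [← Real.exp_add]; ring_nf
    _ ≤ (4/3) * Real.exp (-|t|) := by
        exact mul_le_mul_of_nonneg_right h1 (Real.exp_pos _).le

lemma one_sub_exp_neg (lam : ℝ) (h0 : 0 < lam) (h1 : lam ≤ 1) :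
    lam/2 ≤ 1 - Real.exp (-lam) := by
  have h := Real.add_one_le_exp lam
  have hp := Real.exp_pos lam
  have : Real.exp (-lam) = (Real.exp lam)⁻¹ := Real.exp_neg lam
  rw [this]
  rw [inv_eq_one_div]
  have : 1/Real.exp lam ≤ 1/(1+lam) := by
    apply one_div_le_one_div_of_le (by positivity) (by linarith)
  have h2 : 1/(1+lam) ≤ 1 - lam/2 := by
    rw [div_le_iff₀ (by positivity)]
    nlinarith
  linarith
lemma gauss_pointwise (u : ℝ) (hu : u ≤ |x|) :
    Real.exp (-x^2) ≤ (4/3) * Real.exp (-u) := by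
  calc Real.exp (-x^2) ≤ (4/3) * Real.exp (-|x|) := exp_neg_sq_le_exp_abs x
    _ ≤ (4/3) * Real.exp (-u) := by
        apply mul_le_mul_of_nonneg_left (Real.exp_le_exp.mpr (by linarith)) (by norm_num)

lemma summable_gauss (x lam : ℝ) (hx : 0 ≤ x) (hl : 0 < lam) :
    Summable (fun k : ℕ => Real.exp (-(x - lam*((k:ℝ)+1))^2)) := by
  set N := Nat.floor (x/lam) with hN
  have hr0 : (0:ℝ) ≤ Real.exp (-lam) := (Real.exp_pos _).le
  have hr1 : Real.exp (-lam) < 1 := Real.exp_lt_one_iff.mpr (by linarith)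
  apply Summable.of_nonneg_of_le (fun k => (Real.exp_pos _).le)
      (fun k => ?_) (((summable_geometric_of_lt_one hr0 hr1).mul_left ((4/3) * Real.exp (lam*N))))
  rcases le_or_gt (N:ℝ) (k:ℝ) with hk | hk
  · -- k ≥ N : |x - lam(k+1)| ≥ lam(k - N)
    have hcN : x/lam < (N:ℝ)+1 := Nat.lt_floor_add_one _
    have hxc : x = lam * (x/lam) := by field_simp
    have h1 : lam*((k:ℝ) - N) ≤ |x - lam*((k:ℝ)+1)| := by
      rw [abs_sub_comm, abs_of_nonneg]
      · nlinarith
      · nlinarith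
    calc Real.exp (-(x - lam*((k:ℝ)+1))^2) ≤ (4/3) * Real.exp (-(lam*((k:ℝ)-N))) :=
          gauss_pointwise _ h1
      _ ≤ (4/3) * Real.exp (lam*N) * Real.exp (-lam)^k := by
          rw [← Real.exp_nat_mul, mul_assoc, ← Real.exp_add]
          apply mul_le_mul_of_nonneg_left (Real.exp_le_exp.mpr (by push_cast; ring_nf; linarith)) (by norm_num)
  · -- k < N
    have h2 : Real.exp (-(x - lam*((k:ℝ)+1))^2) ≤ 1 := exp_neg_sq_le_one _
    have h3 : (1:ℝ) ≤ (4/3) * Real.exp (lam*N) * Real.exp (-lam)^k := by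
      rw [← Real.exp_nat_mul, mul_assoc, ← Real.exp_add]
      have : (0:ℝ) ≤ lam*N + (k:ℝ)*(-lam) := by nlinarith
      nlinarith [Real.one_le_exp this]
    linarith

lemma tsum_gauss_le (x lam : ℝ) (hx : 0 ≤ x) (hl : 0 < lam) (hl1 : lam ≤ 1) :
    ∑' k : ℕ, Real.exp (-(x - lam*((k:ℝ)+1))^2) ≤ 16/(3*lam) := by
  set N := Nat.floor (x/lam) with hN
  have hr0 : (0:ℝ) ≤ Real.exp (-lam) := (Real.exp_pos _).le
  have hr1 : Real.exp (-lam) < 1 := Real.exp_lt_one_iff.mpr (by linarith)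
  have hgeom : Summable (fun j : ℕ => Real.exp (-lam)^j) := summable_geometric_of_lt_one hr0 hr1
  have hsum := summable_gauss x lam hx hl
  have hNc : (N:ℝ) ≤ x/lam := Nat.floor_le (by positivity)
  have hcN : x/lam < (N:ℝ)+1 := Nat.lt_floor_add_one _
  have hxc : x = lam * (x/lam) := by field_simp
  have hinv : (1 - Real.exp (-lam))⁻¹ ≤ 2/lam := by
    have h2 := one_sub_exp_neg lam hl hl1
    rw [inv_le_iff_one_le_mul₀ (by linarith)]
    rw [div_mul_eq_mul_div, le_div_iff₀ (by linarith)]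
    nlinarith
  have hgeomsum : ∑' j : ℕ, Real.exp (-lam)^j = (1 - Real.exp (-lam))⁻¹ :=
    tsum_geometric_of_lt_one hr0 hr1
  rw [← Summable.sum_add_tsum_nat_add N hsum]
  have head : ∑ i ∈ Finset.range N, Real.exp (-(x - lam*((i:ℝ)+1))^2)
      ≤ (4/3) * (1 - Real.exp (-lam))⁻¹ := by
    have hterm : ∀ i ∈ Finset.range N, Real.exp (-(x - lam*((i:ℝ)+1))^2)
        ≤ (4/3) * Real.exp (-lam)^(N-1-i) := by
      intro i hi
      rw [Finset.mem_range] at hi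
      have hcast : ((N-1-i : ℕ):ℝ) = (N:ℝ) - 1 - i := by
        have h1 : i + 1 ≤ N := hi
        have h2 : N - 1 - i = N - (i+1) := by omega
        rw [h2, Nat.cast_sub h1]
        push_cast
        ring
      have h1 : lam * ((N:ℝ)-1-i) ≤ |x - lam*((i:ℝ)+1)| := by
        rw [abs_of_nonneg] <;> nlinarith
      calc Real.exp (-(x - lam*((i:ℝ)+1))^2) ≤ (4/3) * Real.exp (-(lam*((N:ℝ)-1-i))) :=
            gauss_pointwise _ h1
        _ = (4/3) * Real.exp (-lam)^(N-1-i) := by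
            rw [← Real.exp_nat_mul, hcast]
            ring_nf
    calc ∑ i ∈ Finset.range N, Real.exp (-(x - lam*((i:ℝ)+1))^2)
        ≤ ∑ i ∈ Finset.range N, (4/3) * Real.exp (-lam)^(N-1-i) :=
          Finset.sum_le_sum hterm
      _ = ∑ j ∈ Finset.range N, (4/3) * Real.exp (-lam)^j := by
          exact Finset.sum_range_reflect (fun j => (4/3) * Real.exp (-lam)^j) N
      _ = (4/3) * ∑ j ∈ Finset.range N, Real.exp (-lam)^j := by
          rw [Finset.mul_sum]
      _ ≤ (4/3) * ∑' j : ℕ, Real.exp (-lam)^j := by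
          apply mul_le_mul_of_nonneg_left (Summable.sum_le_tsum _ (fun j _ => by positivity) hgeom) (by norm_num)
      _ = (4/3) * (1 - Real.exp (-lam))⁻¹ := by rw [hgeomsum]
  have tail : ∑' i : ℕ, Real.exp (-(x - lam*(((i+N:ℕ):ℝ)+1))^2)
      ≤ (4/3) * (1 - Real.exp (-lam))⁻¹ := by
    have hterm : ∀ i : ℕ, Real.exp (-(x - lam*(((i+N:ℕ):ℝ)+1))^2)
        ≤ (4/3) * Real.exp (-lam)^i := by
      intro i
      have h1 : lam * (i:ℝ) ≤ |x - lam*(((i+N:ℕ):ℝ)+1)| := by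
        push_cast
        rw [abs_sub_comm, abs_of_nonneg] <;> nlinarith
      calc Real.exp (-(x - lam*(((i+N:ℕ):ℝ)+1))^2) ≤ (4/3) * Real.exp (-(lam*(i:ℝ))) :=
            gauss_pointwise _ h1
        _ = (4/3) * Real.exp (-lam)^i := by
            rw [← Real.exp_nat_mul]
            ring_nf
    calc ∑' i : ℕ, Real.exp (-(x - lam*(((i+N:ℕ):ℝ)+1))^2)
        ≤ ∑' i : ℕ, (4/3) * Real.exp (-lam)^i := by
          apply Summable.tsum_le_tsum hterm ((summable_nat_add_iff N).mpr hsum) (hgeom.mul_left _)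
      _ = (4/3) * (1 - Real.exp (-lam))⁻¹ := by rw [tsum_mul_left, hgeomsum]
  have hfinal : (4/3) * (1 - Real.exp (-lam))⁻¹ + (4/3) * (1 - Real.exp (-lam))⁻¹ ≤ 16/(3*lam) := by
    have : (4/3) * (1 - Real.exp (-lam))⁻¹ ≤ (4/3) * (2/lam) := by
      apply mul_le_mul_of_nonneg_left hinv (by norm_num)
    have heq : (4/3) * (2/lam) + (4/3) * (2/lam) = 16/(3*lam) := by
      field_simp
      ring
    linarith
  have := add_le_add head tail
  linarith [this]

lemma lem_gA (x u : ℝ) (hx : 0 ≤ x) (hu : x/4 ≤ |u|) :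
    (1 + x^2) * Real.exp (-u^2) ≤ 83/10 := by
  have h1 : Real.exp (-u^2) ≤ 4/(2+u^2)^2 := exp_neg_sq_le_quartic u
  have h2 : x^2/16 ≤ u^2 := by
    have := abs_nonneg u
    nlinarith [sq_abs u]
  have h4 : 4/(2+u^2)^2 ≤ 4/(2+x^2/16)^2 := by
    gcongr <;> nlinarith [sq_nonneg x]
  have h5 : (1 + x^2) * (4/(2+x^2/16)^2) ≤ 83/10 := by
    rw [mul_div_assoc', div_le_iff₀ (by positivity)]
    nlinarith [sq_nonneg (x^2 - 2969/100), sq_nonneg x]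
  calc (1 + x^2) * Real.exp (-u^2) ≤ (1 + x^2) * (4/(2+x^2/16)^2) := by
        apply mul_le_mul_of_nonneg_left (h1.trans h4) (by positivity)
    _ ≤ 83/10 := h5

lemma lem_fix (x : ℝ) (hs : 10 ≤ x^2) : (1 + x^2) * Real.exp (-x^2) ≤ 1/5 := by
  have he : ((3 + x^2)/3)^3 ≤ Real.exp (x^2) := by
    have h1 : (3 + x^2)/3 ≤ Real.exp (x^2/3) := by
      have := Real.add_one_le_exp (x^2/3)
      linarith
    have h2 : Real.exp (x^2) = (Real.exp (x^2/3))^3 := by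
      rw [← Real.exp_nat_mul]
      norm_num
      ring
    rw [h2]
    exact pow_le_pow_left₀ (by positivity) h1 3
  have hp : (0:ℝ) < ((3 + x^2)/3)^3 := by positivity
  have key : Real.exp (-x^2) ≤ (((3 + x^2)/3)^3)⁻¹ := by
    rw [Real.exp_neg]
    exact inv_anti₀ hp he
  have h6 : (1 + x^2) * (((3 + x^2)/3)^3)⁻¹ ≤ 1/5 := by
    rw [← one_div, mul_div_assoc', div_le_div_iff₀ (by positivity) (by norm_num)]
    nlinarith [sq_nonneg (x^2), mul_nonneg (sub_nonneg.mpr hs) (sq_nonneg (x^2))]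
  calc (1 + x^2) * Real.exp (-x^2) ≤ (1 + x^2) * (((3 + x^2)/3)^3)⁻¹ := by
        apply mul_le_mul_of_nonneg_left key (by positivity)
    _ ≤ 1/5 := h6

lemma lem_budget (x : ℝ) (hx : 3 ≤ x) : (1024/27)*(1+x^2) ≤ 15*x^3 := by
  nlinarith [sq_nonneg x, mul_nonneg (sub_nonneg.mpr hx) (sq_nonneg x)]



-- now the assembly
noncomputable def phi : ℝ → ℝ := fun t => Real.exp (-t^2)

lemma phi_pos (t : ℝ) : 0 < phi t := Real.exp_pos _
lemma phi_le_one (t : ℝ) : phi t ≤ 1 := exp_neg_sq_le_one t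

lemma summable_aphi (lam : ℝ) :
    Summable (fun k : ℕ => a (k+1) * phi (lam * ((k:ℝ)+1))) := by
  apply Summable.of_abs
  apply Summable.of_nonneg_of_le (fun k => abs_nonneg _) (fun k => ?_) summable_absa
  rw [abs_mul]
  calc |a (k+1)| * |phi (lam * ((k:ℝ)+1))| ≤ |a (k+1)| * 1 := by
        apply mul_le_mul_of_nonneg_left _ (abs_nonneg _)
        rw [abs_of_pos (phi_pos _)]
        exact phi_le_one _
    _ = |a (k+1)| := mul_one _

lemma absAinf_le (lam : ℝ) : |Ainf phi lam| ≤ 1 := by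
  rw [Ainf, abs_neg]
  calc |∑' k : ℕ, a (k + 1) * phi (lam * ((k:ℝ) + 1))|
      ≤ ∑' k : ℕ, |a (k + 1) * phi (lam * ((k:ℝ) + 1))| := by
        have hsn : Summable (fun k : ℕ => ‖a (k + 1) * phi (lam * ((k:ℝ) + 1))‖) := by
          simpa only [Real.norm_eq_abs] using (summable_aphi lam).abs
        simpa only [Real.norm_eq_abs] using norm_tsum_le_tsum_norm hsn
    _ ≤ ∑' k : ℕ, |a (k + 1)| := by
        apply Summable.tsum_le_tsum (fun k => ?_) ((summable_aphi lam).abs) summable_absa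
        rw [abs_mul]
        calc |a (k+1)| * |phi (lam * ((k:ℝ)+1))| ≤ |a (k+1)| * 1 := by
              apply mul_le_mul_of_nonneg_left _ (abs_nonneg _)
              rw [abs_of_pos (phi_pos _)]
              exact phi_le_one _
          _ = |a (k+1)| := mul_one _
    _ ≤ 1 := tsum_absa_le

lemma summable_main (lam x : ℝ) :
    Summable (fun k : ℕ => a (k+1) * (phi (x + lam * ((k:ℝ)+1)) + phi (x - lam * ((k:ℝ)+1)))) := by
  apply Summable.of_abs
  apply Summable.of_nonneg_of_le (fun k => abs_nonneg _) (fun k => ?_) (summable_absa.mul_left 2)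
  rw [abs_mul]
  have h1 : |phi (x + lam * ((k:ℝ)+1)) + phi (x - lam * ((k:ℝ)+1))| ≤ 2 := by
    rw [abs_of_pos (add_pos (phi_pos _) (phi_pos _))]
    linarith [phi_le_one (x + lam * ((k:ℝ)+1)), phi_le_one (x - lam * ((k:ℝ)+1))]
  calc |a (k+1)| * |phi (x + lam * ((k:ℝ)+1)) + phi (x - lam * ((k:ℝ)+1))|
      ≤ |a (k+1)| * 2 := mul_le_mul_of_nonneg_left h1 (abs_nonneg _)
    _ = 2 * |a (k+1)| := by ring

lemma summable_absmain (lam x : ℝ) :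
    Summable (fun k : ℕ => |a (k+1)| * (phi (x + lam * ((k:ℝ)+1)) + phi (x - lam * ((k:ℝ)+1)))) := by
  apply Summable.of_nonneg_of_le
      (fun k => mul_nonneg (abs_nonneg _) (add_pos (phi_pos _) (phi_pos _)).le)
      (fun k => ?_) (summable_absa.mul_left 2)
  have h1 : phi (x + lam * ((k:ℝ)+1)) + phi (x - lam * ((k:ℝ)+1)) ≤ 2 := by
    linarith [phi_le_one (x + lam * ((k:ℝ)+1)), phi_le_one (x - lam * ((k:ℝ)+1))]
  calc |a (k+1)| * (phi (x + lam * ((k:ℝ)+1)) + phi (x - lam * ((k:ℝ)+1)))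
      ≤ |a (k+1)| * 2 := mul_le_mul_of_nonneg_left h1 (abs_nonneg _)
    _ = 2 * |a (k+1)| := by ring

lemma abs_Pinf_le (lam x : ℝ) :
    |Pinf phi lam x| ≤ 2 * phi x +
      ∑' k : ℕ, |a (k+1)| * (phi (x + lam * ((k:ℝ)+1)) + phi (x - lam * ((k:ℝ)+1))) := by
  rw [Pinf]
  refine (abs_add_le _ _).trans ?_
  have h1 : |2 * Ainf phi lam * phi x| ≤ 2 * phi x := by
    rw [abs_mul, abs_mul, abs_of_pos (phi_pos x), abs_of_nonneg (by norm_num : (0:ℝ) ≤ 2)]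
    calc 2 * |Ainf phi lam| * phi x ≤ 2 * 1 * phi x := by
          apply mul_le_mul_of_nonneg_right _ (phi_pos x).le
          apply mul_le_mul_of_nonneg_left (absAinf_le lam) (by norm_num)
      _ = 2 * phi x := by ring
  have h2 : |∑' k : ℕ, a (k+1) * (phi (x + lam * ((k:ℝ)+1)) + phi (x - lam * ((k:ℝ)+1)))|
      ≤ ∑' k : ℕ, |a (k+1)| * (phi (x + lam * ((k:ℝ)+1)) + phi (x - lam * ((k:ℝ)+1))) := by
    have hsn : Summable (fun k : ℕ => ‖a (k+1) * (phi (x + lam * ((k:ℝ)+1)) + phi (x - lam * ((k:ℝ)+1)))‖) := by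
      simpa only [Real.norm_eq_abs] using (summable_main lam x).abs
    have := norm_tsum_le_tsum_norm hsn
    simp only [Real.norm_eq_abs] at this
    refine this.trans ?_
    apply Summable.tsum_le_tsum (fun k => ?_) hsn (summable_absmain lam x)
    rw [Real.norm_eq_abs, abs_mul, abs_of_pos (add_pos (phi_pos _) (phi_pos _))]
  linarith

lemma region1 (lam x : ℝ) (hs : x^2 ≤ 10) :
    |Pinf phi lam x| ≤ 24 / (1 + x^2) := by
  have hpos : (0:ℝ) < 1 + x^2 := by positivity
  rw [le_div_iff₀ hpos]
  have hM : ∑' k : ℕ, |a (k+1)| * (phi (x + lam * ((k:ℝ)+1)) + phi (x - lam * ((k:ℝ)+1))) ≤ 2 := by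
    calc ∑' k : ℕ, |a (k+1)| * (phi (x + lam * ((k:ℝ)+1)) + phi (x - lam * ((k:ℝ)+1)))
        ≤ ∑' k : ℕ, 2 * |a (k+1)| := by
          apply Summable.tsum_le_tsum (fun k => ?_) (summable_absmain lam x) (summable_absa.mul_left 2)
          have h1 : phi (x + lam * ((k:ℝ)+1)) + phi (x - lam * ((k:ℝ)+1)) ≤ 2 := by
            linarith [phi_le_one (x + lam * ((k:ℝ)+1)), phi_le_one (x - lam * ((k:ℝ)+1))]
          calc |a (k+1)| * (phi (x + lam * ((k:ℝ)+1)) + phi (x - lam * ((k:ℝ)+1)))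
              ≤ |a (k+1)| * 2 := mul_le_mul_of_nonneg_left h1 (abs_nonneg _)
            _ = 2 * |a (k+1)| := by ring
      _ = 2 * ∑' k : ℕ, |a (k+1)| := tsum_mul_left
      _ ≤ 2 * 1 := by linarith [tsum_absa_le]
      _ = 2 := by norm_num
  have h0 := abs_Pinf_le lam x
  have h1 : (1 + x^2) * phi x ≤ 1 := one_add_sq_mul_exp_le x
  have h2 : (0:ℝ) < phi x := phi_pos x
  have habs : 0 ≤ |Pinf phi lam x| := abs_nonneg _
  calc |Pinf phi lam x| * (1 + x^2)
      ≤ (2 * phi x + ∑' k : ℕ, |a (k+1)| * (phi (x + lam * ((k:ℝ)+1)) + phi (x - lam * ((k:ℝ)+1)))) * (1 + x^2) := by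
        apply mul_le_mul_of_nonneg_right h0 hpos.le
    _ ≤ (2 * phi x + 2) * (1 + x^2) := by
        apply mul_le_mul_of_nonneg_right (by linarith) hpos.le
    _ = 2 * ((1 + x^2) * phi x) + 2 * (1 + x^2) := by ring
    _ ≤ 2 * 1 + 2 * 11 := by nlinarith
    _ = 24 := by norm_num

lemma key_term (lam x : ℝ) (hl : 0 < lam) (hl1 : lam ≤ 1) (hx : 0 ≤ x) (hs : 10 ≤ x^2) (k : ℕ) :
    (1 + x^2) * (|a (k+1)| * (phi (x + lam * ((k:ℝ)+1)) + phi (x - lam * ((k:ℝ)+1))))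
      ≤ (17/2) * |a (k+1)| + ((64*lam^3/(9*x^3)) * (1+x^2)) * phi (x - lam * ((k:ℝ)+1)) := by
  have hx0 : 0 < x := by nlinarith
  have hk1 : (0:ℝ) < (k:ℝ)+1 := by positivity
  -- part 1 : (1+x^2) * phi (x + lam(k+1)) ≤ 1/5
  have hplus : (1 + x^2) * phi (x + lam * ((k:ℝ)+1)) ≤ 1/5 := by
    have h1 : phi (x + lam * ((k:ℝ)+1)) ≤ phi x := by
      apply Real.exp_le_exp.mpr
      have : x^2 ≤ (x + lam * ((k:ℝ)+1))^2 := by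
        nlinarith [mul_nonneg hx (mul_nonneg hl.le hk1.le), sq_nonneg (lam*((k:ℝ)+1))]
      linarith
    calc (1 + x^2) * phi (x + lam * ((k:ℝ)+1)) ≤ (1 + x^2) * phi x := by
          apply mul_le_mul_of_nonneg_left h1 (by positivity)
      _ ≤ 1/5 := lem_fix x hs
  rcases le_or_gt (x/4) |x - lam * ((k:ℝ)+1)| with hbig | hsmall
  · -- case A
    have hA : (1 + x^2) * phi (x - lam * ((k:ℝ)+1)) ≤ 83/10 := lem_gA x _ hx hbig
    have hterm : (1 + x^2) * (|a (k+1)| * (phi (x + lam * ((k:ℝ)+1)) + phi (x - lam * ((k:ℝ)+1))))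
        = |a (k+1)| * ((1 + x^2) * phi (x + lam * ((k:ℝ)+1))) + |a (k+1)| * ((1 + x^2) * phi (x - lam * ((k:ℝ)+1))) := by ring
    have hc : 0 ≤ ((64*lam^3/(9*x^3)) * (1+x^2)) * phi (x - lam * ((k:ℝ)+1)) := by
      apply mul_nonneg (mul_nonneg (by positivity) (by positivity)) (phi_pos _).le
    have h2 : |a (k+1)| * ((1 + x^2) * phi (x + lam * ((k:ℝ)+1))) ≤ |a (k+1)| * (1/5) :=
      mul_le_mul_of_nonneg_left hplus (abs_nonneg _)
    have h3 : |a (k+1)| * ((1 + x^2) * phi (x - lam * ((k:ℝ)+1))) ≤ |a (k+1)| * (83/10) :=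
      mul_le_mul_of_nonneg_left hA (abs_nonneg _)
    rw [hterm]
    nlinarith [abs_nonneg (a (k+1))]
  · -- case B
    have h1 : 3*x/4 < lam * ((k:ℝ)+1) := by
      rw [abs_sub_lt_iff] at hsmall
      linarith [hsmall.1]
    have h2 : |a (k+1)| ≤ 64*lam^3/(9*x^3) := by
      refine (abs_a_le_cube k).trans ?_
      rw [div_le_div_iff₀ (by positivity) (by positivity)]
      have hcube : (3*x/4)^3 < (lam * ((k:ℝ)+1))^3 := by
        apply pow_lt_pow_left₀ h1 (by positivity) (by norm_num)
      nlinarith [pow_pos hk1 3, pow_pos hx0 3]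
    have h3 : |a (k+1)| * ((1 + x^2) * phi (x - lam * ((k:ℝ)+1)))
        ≤ ((64*lam^3/(9*x^3)) * (1+x^2)) * phi (x - lam * ((k:ℝ)+1)) := by
      have := mul_le_mul_of_nonneg_right h2
        (mul_nonneg (by positivity : (0:ℝ) ≤ 1 + x^2) (phi_pos (x - lam * ((k:ℝ)+1))).le)
      calc |a (k+1)| * ((1 + x^2) * phi (x - lam * ((k:ℝ)+1)))
          ≤ (64*lam^3/(9*x^3)) * ((1 + x^2) * phi (x - lam * ((k:ℝ)+1))) := this
        _ = ((64*lam^3/(9*x^3)) * (1+x^2)) * phi (x - lam * ((k:ℝ)+1)) := by ring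
    have h4 : |a (k+1)| * ((1 + x^2) * phi (x + lam * ((k:ℝ)+1))) ≤ |a (k+1)| * (1/5) :=
      mul_le_mul_of_nonneg_left hplus (abs_nonneg _)
    have hterm : (1 + x^2) * (|a (k+1)| * (phi (x + lam * ((k:ℝ)+1)) + phi (x - lam * ((k:ℝ)+1))))
        = |a (k+1)| * ((1 + x^2) * phi (x + lam * ((k:ℝ)+1))) + |a (k+1)| * ((1 + x^2) * phi (x - lam * ((k:ℝ)+1))) := by ring
    rw [hterm]
    nlinarith [abs_nonneg (a (k+1))]

lemma region2 (lam x : ℝ) (hl : 0 < lam) (hl1 : lam ≤ 1) (hx : 0 ≤ x) (hs : 10 ≤ x^2) :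
    |Pinf phi lam x| ≤ 24 / (1 + x^2) := by
  have hx0 : 0 < x := by nlinarith
  have hx3 : 3 ≤ x := by nlinarith
  have hpos : (0:ℝ) < 1 + x^2 := by positivity
  rw [le_div_iff₀ hpos]
  set c : ℝ := (64*lam^3/(9*x^3)) * (1+x^2) with hc
  have hc0 : 0 ≤ c := by positivity
  have hsum1 : Summable (fun k : ℕ => (17/2) * |a (k+1)|) := summable_absa.mul_left _
  have hgauss : Summable (fun k : ℕ => phi (x - lam*((k:ℝ)+1))) := summable_gauss x lam hx hl
  have hsum2 : Summable (fun k : ℕ => c * phi (x - lam*((k:ℝ)+1))) := hgauss.mul_left _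
  have hsumRHS : Summable (fun k : ℕ => (17/2) * |a (k+1)| + c * phi (x - lam*((k:ℝ)+1))) :=
    hsum1.add hsum2
  have hsumLHS : Summable (fun k : ℕ =>
      (1 + x^2) * (|a (k+1)| * (phi (x + lam * ((k:ℝ)+1)) + phi (x - lam * ((k:ℝ)+1))))) :=
    (summable_absmain lam x).mul_left _
  have hM : (1 + x^2) * (∑' k : ℕ, |a (k+1)| * (phi (x + lam * ((k:ℝ)+1)) + phi (x - lam * ((k:ℝ)+1))))
      ≤ 17/2 + 15 := by
    rw [← tsum_mul_left]
    have step1 : ∑' k : ℕ, (1 + x^2) * (|a (k+1)| * (phi (x + lam * ((k:ℝ)+1)) + phi (x - lam * ((k:ℝ)+1))))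
        ≤ ∑' k : ℕ, ((17/2) * |a (k+1)| + c * phi (x - lam*((k:ℝ)+1))) := by
      apply Summable.tsum_le_tsum (fun k => key_term lam x hl hl1 hx hs k) hsumLHS hsumRHS
    refine step1.trans ?_
    rw [Summable.tsum_add hsum1 hsum2, tsum_mul_left, tsum_mul_left]
    have hA : (17/2 : ℝ) * ∑' k : ℕ, |a (k+1)| ≤ 17/2 := by
      have h := tsum_absa_le
      nlinarith
    have hB : c * ∑' k : ℕ, phi (x - lam*((k:ℝ)+1)) ≤ 15 := by
      have hg := tsum_gauss_le x lam hx hl hl1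
      have hgn : 0 ≤ ∑' k : ℕ, phi (x - lam*((k:ℝ)+1)) :=
        tsum_nonneg (fun k => (phi_pos _).le)
      have h1 : c * ∑' k : ℕ, phi (x - lam*((k:ℝ)+1)) ≤ c * (16/(3*lam)) :=
        mul_le_mul_of_nonneg_left hg hc0
      refine h1.trans ?_
      rw [hc]
      have heq : (64*lam^3/(9*x^3)) * (1+x^2) * (16/(3*lam)) = 1024*lam^2*(1+x^2)/(27*x^3) := by
        field_simp
        ring
      rw [heq, div_le_iff₀ (by positivity)]
      have hbud := lem_budget x hx3
      have hlam2 : lam^2 ≤ 1 := by nlinarith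
      have h2 : 1024*(1+x^2) ≤ 405*x^3 := by nlinarith
      nlinarith [mul_nonneg (by positivity : (0:ℝ) ≤ 1024*(1+x^2)) (sub_nonneg.mpr hlam2)]
    linarith
  have h0 := abs_Pinf_le lam x
  have hfix : (1 + x^2) * phi x ≤ 1/5 := lem_fix x hs
  calc |Pinf phi lam x| * (1 + x^2)
      ≤ (2 * phi x + ∑' k : ℕ, |a (k+1)| * (phi (x + lam * ((k:ℝ)+1)) + phi (x - lam * ((k:ℝ)+1)))) * (1 + x^2) := by
        apply mul_le_mul_of_nonneg_right h0 hpos.le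
    _ = 2 * ((1 + x^2) * phi x)
        + (1 + x^2) * (∑' k : ℕ, |a (k+1)| * (phi (x + lam * ((k:ℝ)+1)) + phi (x - lam * ((k:ℝ)+1)))) := by ring
    _ ≤ 2 * (1/5) + (17/2 + 15) := by
        have := mul_le_mul_of_nonneg_left hfix (by norm_num : (0:ℝ) ≤ 2)
        linarith
    _ ≤ 24 := by norm_num

lemma phi_even (t : ℝ) : phi (-t) = phi t := by
  unfold phi
  rw [neg_pow]
  norm_num

lemma Pinf_even (lam x : ℝ) : Pinf phi lam (-x) = Pinf phi lam x := by
  unfold Pinf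
  rw [phi_even]
  congr 1
  apply tsum_congr
  intro k
  have e1 : phi (-x + lam * ((k:ℝ)+1)) = phi (x - lam * ((k:ℝ)+1)) := by
    unfold phi
    congr 1
    ring
  have e2 : phi (-x - lam * ((k:ℝ)+1)) = phi (x + lam * ((k:ℝ)+1)) := by
    unfold phi
    congr 1
    ring
  rw [e1, e2]
  ring


theorem Pinf_gaussian_uniform_decay
    (lam : ℝ) (hlam : lam ∈ Set.Ioo (0 : ℝ) 1) (x : ℝ) :
    |Pinf (fun t => Real.exp (-t ^ 2)) lam x| ≤ 24 / (1 + x ^ 2) := by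
  obtain ⟨hl, hl1⟩ := hlam
  show |Pinf phi lam x| ≤ 24 / (1 + x ^ 2)
  rcases le_total 0 x with hx | hx
  · rcases le_total (x^2) 10 with hs | hs
    · exact region1 lam x hs
    · exact region2 lam x hl hl1.le hx hs
  · have hx' : 0 ≤ -x := by linarith
    have key : |Pinf phi lam (-x)| ≤ 24 / (1 + (-x)^2) := by
      rcases le_total ((-x)^2) 10 with hs | hs
      · exact region1 lam (-x) hs
      · exact region2 lam (-x) hl hl1.le hx' hs
    rwa [Pinf_even, neg_sq] at key
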